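/- Let u be an N×N unitary complex matrix and let I_1, …, I_{n+1} be a partition of {1,…,N}. With Z^(p)_{ab}(u) := Σ_{r∈I_p} u_{ar} conj(u_{br}) for 1 ≤ a,b ≤ d, and with the directional derivatives 𝒱_R^{ij} f(u) := (d/dt)|_{t=0} f(u·exp(t(E_{ji}−E_{ij}))), 𝒱_S^{ij} f(u) := (d/dt)|_{t=0} f(u·exp(t√−1(E_{ji}+E_{ij}))), 𝒱_D^{ij} f(u) := (d/dt)|_{t=0} f(u·exp(t√−1(E_{ii}−E_{jj}))), one has for all 1 ≤ p, q ≤ n+1 and all 1 ≤ a,b,c,e ≤ d: (1/(4N)) Σ_{1 ≤ i < j ≤ N} [ 𝒱_R^{ij}(Z^(p)_{ab}) 𝒱_R^{ij}(Z^(q)_{ce}) + 𝒱_S^{ij}(Z^(p)_{ab}) 𝒱_S^{ij}(Z^(q)_{ce}) + (2/N) 𝒱_D^{ij}(Z^(p)_{ab}) 𝒱_D^{ij}(Z^(q)_{ce}) ] = (1/(2N)) δ_{pq} ( δ_{ae} Z^(p)_{cb} + δ_{cb} Z^(p)_{ae} ) − (1/(2N)) ( Z^(p)_{cb} Z^(q)_{ae}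 + Z^(p)_{ae} Z^(q)_{cb} ). -/

import Mathlib

open Finset Matrix

/-- The extracted matrix entries `Z^(p)_{ab}(u) = Σ_{r ∈ I_p} u_{ar} conj(u_{br})`. -/
noncomputable def extractZ18 {N : ℕ} (d : ℕ) (hdN : d ≤ N) (I : Finset (Fin N))
    (u : Matrix (Fin N) (Fin N) ℂ) : Matrix (Fin d) (Fin d) ℂ :=
  Matrix.of fun a b => ∑ r ∈ I, u (Fin.castLE hdN a) r * star (u (Fin.castLE hdN b) r)

/-- The vector field `V_{R_{ij}}` acting on `Z^(p)_{ab}`, as a derivative at `t = 0`. -/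
noncomputable def VR18 {N : ℕ} (d : ℕ) (hdN : d ≤ N) (I : Finset (Fin N))
    (u : Matrix (Fin N) (Fin N) ℂ) (i j : Fin N) (a b : Fin d) : ℂ :=
  deriv (fun t : ℝ => extractZ18 d hdN I
    (u * NormedSpace.exp (t • (Matrix.single j i (1 : ℂ)
      - Matrix.single i j 1))) a b) 0

/-- The vector field `V_{S_{ij}}` acting on `Z^(p)_{ab}`, as a derivative at `t = 0`. -/
noncomputable def VS18 {N : ℕ} (d : ℕ) (hdN : d ≤ N) (I : Finset (Fin N))
    (u : Matrix (Fin N) (Fin N) ℂ) (i j : Fin N) (a b : Fin d) : ℂ :=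
  deriv (fun t : ℝ => extractZ18 d hdN I
    (u * NormedSpace.exp (t • (Complex.I • (Matrix.single j i (1 : ℂ)
      + Matrix.single i j 1)))) a b) 0

/-- The vector field `V_{D_{ij}}` acting on `Z^(p)_{ab}`, as a derivative at `t = 0`. -/
noncomputable def VD18 {N : ℕ} (d : ℕ) (hdN : d ≤ N) (I : Finset (Fin N))
    (u : Matrix (Fin N) (Fin N) ℂ) (i j : Fin N) (a b : Fin d) : ℂ :=
  deriv (fun t : ℝ => extractZ18 d hdN I
    (u * NormedSpace.exp (t • (Complex.I • (Matrix.single i i (1 : ℂ)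
      - Matrix.single j j 1)))) a b) 0

section derivkey
attribute [local instance] Matrix.linftyOpNormedAddCommGroup Matrix.linftyOpNormedRing
  Matrix.linftyOpNormedAlgebra

/-- The entry-evaluation continuous linear map on matrices. -/
noncomputable def entryCLM18 (N : ℕ) (s r : Fin N) : Matrix (Fin N) (Fin N) ℂ →L[ℝ] ℂ :=
  LinearMap.toContinuousLinearMap
    ((LinearMap.proj r : (Fin N → ℂ) →ₗ[ℝ] ℂ).comp (LinearMap.proj s))

lemma hasDerivAt_entry18 (N : ℕ) (X : Matrix (Fin N) (Fin N) ℂ) (s r : Fin N) :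
    HasDerivAt (fun t : ℝ => NormedSpace.exp (t • X) s r) (X s r) 0 := by
  have hE : HasDerivAt (fun t : ℝ => NormedSpace.exp (t • X)) X 0 := by
    have h := hasDerivAt_exp_smul_const (𝕂 := ℝ) X 0
    simp at h
    exact h
  have := (entryCLM18 N s r).hasFDerivAt.comp_hasDerivAt 0 hE
  exact this

/-- Key derivative computation: derivative of `Z_{ab}(u exp(tX))` at `t = 0`. -/
lemma key18 {N : ℕ} (d : ℕ) (hdN : d ≤ N) (I : Finset (Fin N))
    (u X : Matrix (Fin N) (Fin N) ℂ) (a b : Fin d) :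
    deriv (fun t : ℝ => extractZ18 d hdN I (u * NormedSpace.exp (t • X)) a b) 0
    = ∑ r ∈ I, ((u * X) (Fin.castLE hdN a) r * star (u (Fin.castLE hdN b) r)
        + u (Fin.castLE hdN a) r * star ((u * X) (Fin.castLE hdN b) r)) := by
  have hrow : ∀ (A : Fin N) (r : Fin N),
      HasDerivAt (fun t : ℝ => (u * NormedSpace.exp (t • X)) A r) ((u * X) A r) 0 := by
    intro A r
    have h : ∀ t : ℝ, (u * NormedSpace.exp (t • X)) A r
        = ∑ s, u A s * NormedSpace.exp (t • X) s r := fun t => Matrix.mul_apply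
    rw [show (fun t : ℝ => (u * NormedSpace.exp (t • X)) A r)
        = fun t : ℝ => ∑ s, u A s * NormedSpace.exp (t • X) s r from funext h,
      Matrix.mul_apply]
    exact HasDerivAt.fun_sum fun s _ => (hasDerivAt_entry18 N X s r).const_mul (u A s)
  have hmain : HasDerivAt (fun t : ℝ => extractZ18 d hdN I (u * NormedSpace.exp (t • X)) a b)
      (∑ r ∈ I, ((u * X) (Fin.castLE hdN a) r * star (u (Fin.castLE hdN b) r)
        + u (Fin.castLE hdN a) r * star ((u * X) (Fin.castLE hdN b) r))) 0 := by
    have : ∀ r ∈ I, HasDerivAt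
        (fun t : ℝ => (u * NormedSpace.exp (t • X)) (Fin.castLE hdN a) r
          * star ((u * NormedSpace.exp (t • X)) (Fin.castLE hdN b) r))
        ((u * X) (Fin.castLE hdN a) r * star (u (Fin.castLE hdN b) r)
          + u (Fin.castLE hdN a) r * star ((u * X) (Fin.castLE hdN b) r)) 0 := by
      intro r _
      have := (hrow (Fin.castLE hdN a) r).mul (hrow (Fin.castLE hdN b) r).star
      simp [NormedSpace.exp_zero] at this
      exact this
    simpa [extractZ18] using HasDerivAt.fun_sum this
  exact hmain.deriv

end derivkey

lemma uStd18 {N : ℕ} (u : Matrix (Fin N) (Fin N) ℂ) (s t A r : Fin N) :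
    (u * Matrix.single s t (1 : ℂ)) A r = if r = t then u A s else 0 := by
  rcases eq_or_ne r t with h | h
  · subst h; simp
  · simp [Matrix.mul_single_apply_of_ne (hbj := h), h]

lemma VR18_eq {N : ℕ} (d : ℕ) (hdN : d ≤ N) (I : Finset (Fin N))
    (u : Matrix (Fin N) (Fin N) ℂ) (i j : Fin N) (a b : Fin d) :
    VR18 d hdN I u i j a b
    = ((if i ∈ I then (1 : ℂ) else 0) - (if j ∈ I then 1 else 0))
      * (u (Fin.castLE hdN a) j * star (u (Fin.castLE hdN b) i)
        + u (Fin.castLE hdN a) i * star (u (Fin.castLE hdN b) j)) := by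
  set A := Fin.castLE hdN a
  set B := Fin.castLE hdN b
  rw [VR18, key18]
  have hcong : ∀ r ∈ I,
      ((u * (Matrix.single j i (1:ℂ) - Matrix.single i j 1) : Matrix (Fin N) (Fin N) ℂ) A r * star (u B r)
        + u A r * star ((u * (Matrix.single j i (1:ℂ) - Matrix.single i j 1) : Matrix (Fin N) (Fin N) ℂ) B r))
      = (if r = i then u A j * star (u B r) + u A r * star (u B j) else 0)
        - (if r = j then u A i * star (u B r) + u A r * star (u B i) else 0) := by
    intro r _
    simp only [Matrix.mul_sub, Matrix.sub_apply, uStd18, star_sub]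
    split_ifs <;> subst_vars <;> (try simp only [map_zero, star_zero, mul_zero, zero_mul, add_zero, zero_add]) <;> ring
  rw [Finset.sum_congr rfl hcong, Finset.sum_sub_distrib,
    Finset.sum_ite_eq' I i (fun r => u A j * star (u B r) + u A r * star (u B j)),
    Finset.sum_ite_eq' I j (fun r => u A i * star (u B r) + u A r * star (u B i))]
  by_cases hi : i ∈ I <;> by_cases hj : j ∈ I <;> simp [hi, hj] <;> ring

lemma VS18_eq {N : ℕ} (d : ℕ) (hdN : d ≤ N) (I : Finset (Fin N))
    (u : Matrix (Fin N) (Fin N) ℂ) (i j : Fin N) (a b : Fin d) :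
    VS18 d hdN I u i j a b
    = Complex.I * ((if i ∈ I then (1 : ℂ) else 0) - (if j ∈ I then 1 else 0))
      * (u (Fin.castLE hdN a) j * star (u (Fin.castLE hdN b) i)
        - u (Fin.castLE hdN a) i * star (u (Fin.castLE hdN b) j)) := by
  set A := Fin.castLE hdN a
  set B := Fin.castLE hdN b
  rw [VS18, key18]
  have hcong : ∀ r ∈ I,
      ((u * (Complex.I • (Matrix.single j i (1:ℂ) + Matrix.single i j 1)) : Matrix (Fin N) (Fin N) ℂ) A r
          * star (u B r)
        + u A r * star ((u * (Complex.I • (Matrix.single j i (1:ℂ)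
          + Matrix.single i j 1)) : Matrix (Fin N) (Fin N) ℂ) B r))
      = (if r = i then Complex.I * (u A j * star (u B r) - u A r * star (u B j)) else 0)
        + (if r = j then Complex.I * (u A i * star (u B r) - u A r * star (u B i)) else 0) := by
    intro r _
    simp only [Matrix.mul_smul, Matrix.mul_add, Matrix.smul_apply, Matrix.add_apply,
      smul_eq_mul, uStd18, star_mul', star_add, Complex.star_def, Complex.conj_I]
    split_ifs <;> subst_vars <;> (try simp only [map_zero, star_zero, mul_zero, zero_mul, add_zero, zero_add, sub_zero, zero_sub]) <;> ring
  rw [Finset.sum_congr rfl hcong, Finset.sum_add_distrib,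
    Finset.sum_ite_eq' I i (fun r => Complex.I * (u A j * star (u B r) - u A r * star (u B j))),
    Finset.sum_ite_eq' I j (fun r => Complex.I * (u A i * star (u B r) - u A r * star (u B i)))]
  by_cases hi : i ∈ I <;> by_cases hj : j ∈ I <;> simp [hi, hj] <;> ring

lemma VD18_eq {N : ℕ} (d : ℕ) (hdN : d ≤ N) (I : Finset (Fin N))
    (u : Matrix (Fin N) (Fin N) ℂ) (i j : Fin N) (a b : Fin d) :
    VD18 d hdN I u i j a b = 0 := by
  set A := Fin.castLE hdN a
  set B := Fin.castLE hdN b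
  rw [VD18, key18]
  apply Finset.sum_eq_zero
  intro r _
  simp only [Matrix.mul_smul, Matrix.mul_sub, Matrix.smul_apply, Matrix.sub_apply,
    smul_eq_mul, uStd18, star_mul', star_sub, Complex.star_def, Complex.conj_I]
  split_ifs <;> subst_vars <;> (try simp only [map_zero, star_zero, mul_zero, zero_mul, add_zero, zero_add, sub_zero, zero_sub]) <;> ring

lemma sum_lt_eq18 {M : ℕ} (h : Fin M → Fin M → ℂ) (hsymm : ∀ i j, h i j = h j i)
    (hdiag : ∀ i, h i i = 0) :
    ∑ i : Fin M, ∑ j ∈ Finset.univ.filter (fun j => i < j), 2 * h i j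
      = ∑ i : Fin M, ∑ j : Fin M, h i j := by
  have step1 : ∀ i : Fin M, ∑ j : Fin M, h i j
      = (∑ j ∈ Finset.univ.filter (fun j => i < j), h i j)
        + ∑ j ∈ Finset.univ.filter (fun j => j < i), h i j := by
    intro i
    rw [← Finset.sum_filter_add_sum_filter_not Finset.univ (fun j => i < j) (h i)]
    congr 1
    refine (Finset.sum_subset (fun j hj => ?_) (fun j hj hnj => ?_)).symm
    · simp only [Finset.mem_filter, Finset.mem_univ, true_and] at hj ⊢
      exact lt_asymm hj
    · simp only [Finset.mem_filter, Finset.mem_univ, true_and, not_lt] at hj hnj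
      have : j = i := le_antisymm hj hnj
      subst this; exact hdiag j
  have step2 : ∑ i : Fin M, ∑ j ∈ Finset.univ.filter (fun j => j < i), h i j
      = ∑ i : Fin M, ∑ j ∈ Finset.univ.filter (fun j => i < j), h i j := by
    simp only [Finset.sum_filter]
    rw [Finset.sum_comm]
    exact Finset.sum_congr rfl fun i _ => Finset.sum_congr rfl fun j _ => by
      by_cases hij : i < j <;> simp [hij, hsymm i j]
  calc ∑ i : Fin M, ∑ j ∈ Finset.univ.filter (fun j => i < j), 2 * h i j
      = 2 * ∑ i : Fin M, ∑ j ∈ Finset.univ.filter (fun j => i < j), h i j := by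
        simp [Finset.mul_sum]
    _ = ∑ i : Fin M, ∑ j : Fin M, h i j := by
        rw [two_mul, Finset.sum_congr rfl (fun i _ => step1 i), Finset.sum_add_distrib, step2]

lemma main_algebra18 {M : ℕ} (P Q f g : Fin M → ℂ) :
    ∑ i : Fin M, ∑ j : Fin M, (P i - P j) * (Q i - Q j) * (f j * g i + f i * g j)
    = (∑ i, P i * Q i * g i) * (∑ i, f i) + (∑ i, P i * Q i * f i) * (∑ i, g i)
      - (∑ i, P i * g i) * (∑ i, Q i * f i) - (∑ i, P i * f i) * (∑ i, Q i * g i)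
      - (∑ i, Q i * g i) * (∑ i, P i * f i) - (∑ i, Q i * f i) * (∑ i, P i * g i)
      + (∑ i, g i) * (∑ i, P i * Q i * f i) + (∑ i, f i) * (∑ i, P i * Q i * g i) := by
  have inner : ∀ i : Fin M, ∑ j : Fin M, (P i - P j) * (Q i - Q j) * (f j * g i + f i * g j)
      = P i * Q i * g i * (∑ j, f j) + P i * Q i * f i * (∑ j, g j)
        - P i * g i * (∑ j, Q j * f j) - P i * f i * (∑ j, Q j * g j)
        - Q i * g i * (∑ j, P j * f j) - Q i * f i * (∑ j, P j * g j)
        + g i * (∑ j, P j * Q j * f j) + f i * (∑ j, P j * Q j * g j) := by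
    intro i
    rw [Finset.sum_congr rfl (fun j _ => show (P i - P j) * (Q i - Q j) * (f j * g i + f i * g j)
      = P i * Q i * g i * f j + P i * Q i * f i * g j
        - P i * g i * (Q j * f j) - P i * f i * (Q j * g j)
        - Q i * g i * (P j * f j) - Q i * f i * (P j * g j)
        + g i * (P j * Q j * f j) + f i * (P j * Q j * g j) from by ring)]
    simp only [Finset.sum_add_distrib, Finset.sum_sub_distrib, ← Finset.mul_sum]
  rw [Finset.sum_congr rfl (fun i _ => inner i)]
  simp only [Finset.sum_add_distrib, Finset.sum_sub_distrib, ← Finset.sum_mul]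

theorem stmt_18 (N n d : ℕ) (hN : 1 ≤ N) (hdN : d ≤ N)
    (I : Fin (n + 1) → Finset (Fin N))
    (hdisj : ∀ i j, i ≠ j → Disjoint (I i) (I j))
    (hcover : ∀ r, ∃ i, r ∈ I i)
    (u : Matrix (Fin N) (Fin N) ℂ)
    (hu : u ∈ Matrix.unitaryGroup (Fin N) ℂ)
    (p q : Fin (n + 1)) (a b c e : Fin d) :
    (1 / (4 * (N : ℂ))) * ∑ i : Fin N, ∑ j ∈ Finset.univ.filter (fun j => i < j),
        (VR18 d hdN (I p) u i j a b * VR18 d hdN (I q) u i j c e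
          + VS18 d hdN (I p) u i j a b * VS18 d hdN (I q) u i j c e
          + (2 / (N : ℂ)) * VD18 d hdN (I p) u i j a b * VD18 d hdN (I q) u i j c e)
      = (1 / (2 * (N : ℂ))) * (if p = q then 1 else 0)
          * ((if a = e then (1 : ℂ) else 0) * extractZ18 d hdN (I p) u c b
            + (if c = b then (1 : ℂ) else 0) * extractZ18 d hdN (I p) u a e)
        - (1 / (2 * (N : ℂ)))
          * (extractZ18 d hdN (I p) u c b * extractZ18 d hdN (I q) u a e
            + extractZ18 d hdN (I p) u a e * extractZ18 d hdN (I q) u c b) := by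
  classical
  have hNne : (N : ℂ) ≠ 0 := Nat.cast_ne_zero.mpr (by omega)
  have huu : ∀ A E : Fin N, ∑ i, u A i * star (u E i) = if A = E then (1:ℂ) else 0 := by
    intro A E
    have h := Matrix.mem_unitaryGroup_iff.mp hu
    have h2 := congrFun (congrFun h A) E
    simpa [Matrix.mul_apply, Matrix.star_apply, Matrix.one_apply] using h2
  set f : Fin N → ℂ := fun i => u (Fin.castLE hdN a) i * star (u (Fin.castLE hdN e) i) with hf
  set g : Fin N → ℂ := fun i => u (Fin.castLE hdN c) i * star (u (Fin.castLE hdN b) i) with hg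
  set P : Fin N → ℂ := fun i => if i ∈ I p then (1:ℂ) else 0 with hP
  set Q : Fin N → ℂ := fun i => if i ∈ I q then (1:ℂ) else 0 with hQ
  have hsummand : ∀ i j : Fin N,
      VR18 d hdN (I p) u i j a b * VR18 d hdN (I q) u i j c e
        + VS18 d hdN (I p) u i j a b * VS18 d hdN (I q) u i j c e
        + (2 / (N:ℂ)) * VD18 d hdN (I p) u i j a b * VD18 d hdN (I q) u i j c e
      = 2 * ((P i - P j) * (Q i - Q j) * (f j * g i + f i * g j)) := by
    intro i j
    rw [VR18_eq, VR18_eq, VS18_eq, VS18_eq, VD18_eq, VD18_eq]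
    simp only [hP, hQ, hf, hg]
    linear_combination (((if i ∈ I p then (1:ℂ) else 0) - (if j ∈ I p then 1 else 0))
      * ((if i ∈ I q then (1:ℂ) else 0) - (if j ∈ I q then 1 else 0))
      * (u (Fin.castLE hdN a) j * star (u (Fin.castLE hdN b) i)
          - u (Fin.castLE hdN a) i * star (u (Fin.castLE hdN b) j))
      * (u (Fin.castLE hdN c) j * star (u (Fin.castLE hdN e) i)
          - u (Fin.castLE hdN c) i * star (u (Fin.castLE hdN e) j))) * Complex.I_mul_I
  have hstep : ∑ i : Fin N, ∑ j ∈ Finset.univ.filter (fun j => i < j),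
      (VR18 d hdN (I p) u i j a b * VR18 d hdN (I q) u i j c e
        + VS18 d hdN (I p) u i j a b * VS18 d hdN (I q) u i j c e
        + (2 / (N:ℂ)) * VD18 d hdN (I p) u i j a b * VD18 d hdN (I q) u i j c e)
      = ∑ i : Fin N, ∑ j : Fin N, (P i - P j) * (Q i - Q j) * (f j * g i + f i * g j) := by
    rw [Finset.sum_congr rfl (fun i _ => Finset.sum_congr rfl (fun j _ => hsummand i j))]
    exact sum_lt_eq18 _ (fun i j => by ring) (fun i => by ring)
  have hSf : (∑ i, f i) = (if a = e then (1:ℂ) else 0) := by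
    simp only [hf]
    rw [huu (Fin.castLE hdN a) (Fin.castLE hdN e)]
    simp [Fin.castLE_inj]
  have hSg : (∑ i, g i) = (if c = b then (1:ℂ) else 0) := by
    simp only [hg]
    rw [huu (Fin.castLE hdN c) (Fin.castLE hdN b)]
    simp [Fin.castLE_inj]
  have hSPf : (∑ i, P i * f i) = extractZ18 d hdN (I p) u a e := by
    simp only [hP, hf, ite_mul, one_mul, zero_mul]
    rw [Finset.sum_ite_mem, Finset.univ_inter]
    rfl
  have hSPg : (∑ i, P i * g i) = extractZ18 d hdN (I p) u c b := by
    simp only [hP, hg, ite_mul, one_mul, zero_mul]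
    rw [Finset.sum_ite_mem, Finset.univ_inter]
    rfl
  have hSQf : (∑ i, Q i * f i) = extractZ18 d hdN (I q) u a e := by
    simp only [hQ, hf, ite_mul, one_mul, zero_mul]
    rw [Finset.sum_ite_mem, Finset.univ_inter]
    rfl
  have hSQg : (∑ i, Q i * g i) = extractZ18 d hdN (I q) u c b := by
    simp only [hQ, hg, ite_mul, one_mul, zero_mul]
    rw [Finset.sum_ite_mem, Finset.univ_inter]
    rfl
  have hPQ : ∀ i, P i * Q i = (if p = q then (1:ℂ) else 0) * P i := by
    intro i
    rcases eq_or_ne p q with rfl | hpq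
    · simp only [hP, hQ, if_pos rfl, one_mul]
      by_cases hi : i ∈ I p <;> simp [hi]
    · simp only [hP, hQ, if_neg hpq, zero_mul]
      by_cases hi : i ∈ I p
      · have hiq : i ∉ I q := fun hiq => (Finset.disjoint_left.mp (hdisj p q hpq)) hi hiq
        simp [hi, hiq]
      · simp [hi]
  have hSPQf : (∑ i, P i * Q i * f i)
      = (if p = q then (1:ℂ) else 0) * extractZ18 d hdN (I p) u a e := by
    calc (∑ i, P i * Q i * f i) = ∑ i, (if p = q then (1:ℂ) else 0) * (P i * f i) :=
          Finset.sum_congr rfl fun i _ => by rw [hPQ i]; ring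
      _ = _ := by rw [← Finset.mul_sum, hSPf]
  have hSPQg : (∑ i, P i * Q i * g i)
      = (if p = q then (1:ℂ) else 0) * extractZ18 d hdN (I p) u c b := by
    calc (∑ i, P i * Q i * g i) = ∑ i, (if p = q then (1:ℂ) else 0) * (P i * g i) :=
          Finset.sum_congr rfl fun i _ => by rw [hPQ i]; ring
      _ = _ := by rw [← Finset.mul_sum, hSPg]
  rw [hstep, main_algebra18 P Q f g, hSf, hSg, hSPf, hSPg, hSQf, hSQg, hSPQf, hSPQg]
  by_cases hpq : p = q <;> by_cases hae : a = e <;> by_cases hcb : c = b <;>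
    simp only [hpq, hae, hcb, if_true, if_false, if_pos, if_neg, reduceIte] <;>
    field_simp <;> ring
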